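/- For k ∈ {3,4,5}, an empty k-circuit in which the spanning face f_e neighbours k pairwise different faces does not exist. -/

import Mathlib

/-- A combinatorial map (connected graph cellularly embedded in an orientable surface),
given by a set of darts `D`, the edge involution `σ` and the rotation `ρ`. -/
structure CombMap where
  D : Type
  fin : Finite D
  σ : Equiv.Perm D
  ρ : Equiv.Perm D
  σ_invol : ∀ d, σ (σ d) = d
  σ_fixfree : ∀ d, σ d ≠ d
  conn : ∀ d d' : D, ∃ g ∈ Subgroup.closure ({σ, ρ} : Set (Equiv.Perm D)), g d = d'

attribute [instance] CombMap.fin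

namespace CombMap

variable (M : CombMap)

/-- The face permutation. -/
def φ : Equiv.Perm M.D := M.ρ * M.σ

def vSetoid : Setoid M.D :=
  ⟨M.ρ.SameCycle, ⟨fun _ => Equiv.Perm.SameCycle.refl _ _,
    Equiv.Perm.SameCycle.symm, Equiv.Perm.SameCycle.trans⟩⟩

def eSetoid : Setoid M.D :=
  ⟨M.σ.SameCycle, ⟨fun _ => Equiv.Perm.SameCycle.refl _ _,
    Equiv.Perm.SameCycle.symm, Equiv.Perm.SameCycle.trans⟩⟩

def fSetoid : Setoid M.D :=
  ⟨M.φ.SameCycle, ⟨fun _ => Equiv.Perm.SameCycle.refl _ _,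
    Equiv.Perm.SameCycle.symm, Equiv.Perm.SameCycle.trans⟩⟩

/-- Vertices are orbits of `ρ`. -/
def Vertex := Quotient M.vSetoid
/-- Edges are orbits of `σ`. -/
def Edge := Quotient M.eSetoid
/-- Faces are orbits of `φ`. -/
def Face := Quotient M.fSetoid

instance : Finite M.Vertex := Quotient.finite _
instance : Finite M.Edge := Quotient.finite _
instance : Finite M.Face := Quotient.finite _

def vtx (d : M.D) : M.Vertex := Quotient.mk M.vSetoid d
def edg (d : M.D) : M.Edge := Quotient.mk M.eSetoid d
def fce (d : M.D) : M.Face := Quotient.mk M.fSetoid d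

noncomputable def nV : ℕ := Nat.card M.Vertex
noncomputable def nE : ℕ := Nat.card M.Edge
noncomputable def nF : ℕ := Nat.card M.Face

/-- The size of a face: the length of its facial walk, i.e. the number of darts in it. -/
noncomputable def faceSize (f : M.Face) : ℕ := Nat.card {d : M.D // M.fce d = f}

/-- The degree of a vertex: the number of darts emanating from it. -/
noncomputable def degree (v : M.Vertex) : ℕ := Nat.card {d : M.D // M.vtx d = v}

/-- The face excess `Σ_f (d(f) - 3)`. -/
noncomputable def faceExcess : ℤ := ∑ᶠ f : M.Face, ((M.faceSize f : ℤ) - 3)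

/-- The underlying graph of the map is simple: no loops, no multiple edges. -/
def Simple : Prop :=
  (∀ d, M.vtx d ≠ M.vtx (M.σ d)) ∧
  ∀ d d', M.vtx d = M.vtx d' → M.vtx (M.σ d) = M.vtx (M.σ d') → M.edg d = M.edg d'

/-- The dual has no loops. -/
def DualLoopFree : Prop := ∀ d, M.fce d ≠ M.fce (M.σ d)

/-- The dual is simple: no loops and no multiple edges. -/
def DualSimple : Prop :=
  M.DualLoopFree ∧
  ∀ d d', M.fce d = M.fce d' → M.fce (M.σ d) = M.fce (M.σ d') → M.edg d = M.edg d'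

/-- The underlying simple graph on the vertices of the map. -/
def graph : SimpleGraph M.Vertex :=
  SimpleGraph.fromRel (fun a b => ∃ d, M.vtx d = a ∧ M.vtx (M.σ d) = b)

/-- The underlying simple graph of the dual map, on the faces of the map. -/
def dualGraph : SimpleGraph M.Face :=
  SimpleGraph.fromRel (fun a b => ∃ d, M.fce d = a ∧ M.fce (M.σ d) = b)

/-- Vertex `v` lies on the face `f`. -/
def VertexOnFace (v : M.Vertex) (f : M.Face) : Prop := ∃ d, M.fce d = f ∧ M.vtx d = v

/-- Faces `f` and `f'` share an edge. -/
def FaceAdj (f f' : M.Face) : Prop := ∃ d, M.fce d = f ∧ M.fce (M.σ d) = f'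

end CombMap

/-- `k`-connectivity of a graph: more than `k` vertices, and removing fewer than `k`
vertices never disconnects it. -/
def KConn {α : Type} (H : SimpleGraph α) (k : ℕ) : Prop :=
  k < Nat.card α ∧ ∀ S : Set α, S.ncard < k → (H.induce Sᶜ).Connected

namespace CombMap

variable (M : CombMap)

/-- An empty `k`-circuit: a map on at most `k` vertices with a spanning face `f_e` of
size `k`, whose underlying graph is simple, whose dual has no loops, and all of whose
dual multi-edges are incident with `f_e`. -/
def IsEmptyCircuit (k : ℕ) (fe : M.Face) : Prop :=
  M.nV ≤ k ∧ M.faceSize fe = k ∧ (∀ v : M.Vertex, M.VertexOnFace v fe) ∧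
  M.Simple ∧ M.DualLoopFree ∧
  ∀ d d', M.fce d = M.fce d' → M.fce (M.σ d) = M.fce (M.σ d') → M.edg d ≠ M.edg d' →
    (M.fce d = fe ∨ M.fce (M.σ d) = fe)

/-- An empty `k`-pair: a map on at most `k` vertices with two spanning faces
`f_e, f_e'` with `d(f_e)+d(f_e') = k` not sharing an edge, whose underlying graph is
simple, whose dual has no loops, and all of whose dual multi-edges are incident with
`f_e` or `f_e'`. -/
def IsEmptyPair (k : ℕ) (fe fe' : M.Face) : Prop :=
  M.nV ≤ k ∧ fe ≠ fe' ∧ M.faceSize fe + M.faceSize fe' = k ∧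
  (∀ v : M.Vertex, M.VertexOnFace v fe ∨ M.VertexOnFace v fe') ∧
  ¬ M.FaceAdj fe fe' ∧
  M.Simple ∧ M.DualLoopFree ∧
  ∀ d d', M.fce d = M.fce d' → M.fce (M.σ d) = M.fce (M.σ d') → M.edg d ≠ M.edg d' →
    (M.fce d = fe ∨ M.fce d = fe' ∨ M.fce (M.σ d) = fe ∨ M.fce (M.σ d) = fe')

end CombMap


section AuxLemmas

open Equiv Equiv.Perm Finset

open Equiv Equiv.Perm Finset

private lemma neg_one_pow_congr' {a b : ℕ} (h : a % 2 = b % 2) : ((-1:ℤˣ))^a = (-1)^b := by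
  rw [← Nat.div_add_mod a 2, ← Nat.div_add_mod b 2, pow_add, pow_add, pow_mul, pow_mul]
  norm_num [h]

private lemma nat_card_fiber {α β : Type} [Finite α] [Fintype β] (g : α → β) :
    Nat.card α = ∑ b : β, Nat.card {a // g a = b} := by
  classical
  cases nonempty_fintype α
  simp_rw [Nat.card_eq_fintype_card]
  rw [← Fintype.card_sigma]
  exact Fintype.card_congr (Equiv.sigmaFiberEquiv g).symm

private def orbClass {α : Type} [Fintype α] [DecidableEq α] (x : Equiv.Perm α) (a : α) :
    {a // x a = a} ⊕ {c // c ∈ x.cycleFactorsFinset} :=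
  if h : x a = a then Sum.inl ⟨a, h⟩ else
    Sum.inr ⟨x.cycleOf a, cycleOf_mem_cycleFactorsFinset_iff.2 (Equiv.Perm.mem_support.2 h)⟩

private lemma orbClass_pos {α : Type} [Fintype α] [DecidableEq α] {x : Equiv.Perm α} {a : α}
    (h : x a = a) : orbClass x a = Sum.inl ⟨a, h⟩ := dif_pos h

private lemma orbClass_neg {α : Type} [Fintype α] [DecidableEq α] {x : Equiv.Perm α} {a : α}
    (h : ¬ x a = a) : orbClass x a =
      Sum.inr ⟨x.cycleOf a, cycleOf_mem_cycleFactorsFinset_iff.2 (Equiv.Perm.mem_support.2 h)⟩ :=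
  dif_neg h

private lemma card_quot_sameCycle {α : Type} [Fintype α] [DecidableEq α]
    (x : Equiv.Perm α) (s : Setoid α) (hs : ∀ a b, s.r a b ↔ x.SameCycle a b) :
    Nat.card (Quotient s) + x.support.card
      = Fintype.card α + Multiset.card x.cycleType := by
  classical
  have hresp : ∀ a b, s.r a b → orbClass x a = orbClass x b := by
    intro a b hab
    have hab' : x.SameCycle a b := (hs a b).1 hab
    by_cases ha : x a = a
    · obtain rfl : a = b := hab'.eq_of_left ha
      rfl
    · have hb : ¬ x b = b := fun hb => ha (by
        obtain rfl : b = a := hab'.symm.eq_of_left hb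
        exact hb)
      rw [orbClass_neg ha, orbClass_neg hb]
      exact congrArg _ (Subtype.ext hab'.cycleOf_eq)
  set g : Quotient s → {a // x a = a} ⊕ {c // c ∈ x.cycleFactorsFinset} :=
    Quotient.lift (orbClass x) hresp with hg
  have hbij : Function.Bijective g := by
    constructor
    · rintro ⟨a⟩ ⟨b⟩ hab
      have hab2 : orbClass x a = orbClass x b := hab
      refine Quotient.sound ?_
      show s.r a b
      rw [hs a b]
      by_cases ha : x a = a <;> by_cases hb : x b = b
      · rw [orbClass_pos ha, orbClass_pos hb] at hab2
        obtain rfl : a = b := congrArg Subtype.val (Sum.inl.inj hab2)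
        exact Equiv.Perm.SameCycle.refl _ _
      · rw [orbClass_pos ha, orbClass_neg hb] at hab2; exact absurd hab2 (by simp)
      · rw [orbClass_neg ha, orbClass_pos hb] at hab2; exact absurd hab2 (by simp)
      · rw [orbClass_neg ha, orbClass_neg hb] at hab2
        have hc : x.cycleOf a = x.cycleOf b := congrArg Subtype.val (Sum.inr.inj hab2)
        have : b ∈ (x.cycleOf a).support := by
          rw [hc, Equiv.Perm.mem_support_cycleOf_iff]
          exact ⟨Equiv.Perm.SameCycle.refl _ _, Equiv.Perm.mem_support.2 hb⟩
        exact (Equiv.Perm.mem_support_cycleOf_iff.1 this).1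
    · rintro (⟨a, ha⟩ | ⟨c, hc⟩)
      · exact ⟨Quotient.mk s a, orbClass_pos ha⟩
      · have hcyc : c.IsCycle := (Equiv.Perm.mem_cycleFactorsFinset_iff.1 hc).1
        obtain ⟨a, ha⟩ := hcyc.nonempty_support
        have hxa : ¬ x a = a := by
          have h2 := (Equiv.Perm.mem_cycleFactorsFinset_iff.1 hc).2 a ha
          rw [← h2]; exact Equiv.Perm.mem_support.1 ha
        refine ⟨Quotient.mk s a, ?_⟩
        rw [show g (Quotient.mk s a) = orbClass x a from rfl, orbClass_neg hxa]
        exact congrArg _ (Subtype.ext (Equiv.Perm.cycle_is_cycleOf ha hc).symm)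
  have h1 : Nat.card (Quotient s)
      = Nat.card {a // x a = a} + Nat.card {c // c ∈ x.cycleFactorsFinset} := by
    rw [Nat.card_eq_of_bijective g hbij, Nat.card_sum]
  have h2 : Nat.card {a // x a = a} + x.support.card = Fintype.card α := by
    rw [Nat.card_eq_fintype_card, Fintype.card_subtype]
    have h4 : x.support.card = (univ.filter fun a => ¬ x a = a).card := rfl
    rw [h4]
    exact Finset.card_filter_add_card_filter_not _
  have h3 : Nat.card {c // c ∈ x.cycleFactorsFinset} = Multiset.card x.cycleType := by
    rw [Nat.card_eq_fintype_card, Fintype.card_coe, Equiv.Perm.cycleType_def, Multiset.card_map]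
    rfl
  omega

private lemma sign_eq_pow_card {α : Type} [Fintype α] [DecidableEq α]
    (x : Equiv.Perm α) (s : Setoid α) (hs : ∀ a b, s.r a b ↔ x.SameCycle a b) :
    Equiv.Perm.sign x = (-1 : ℤˣ)^(Fintype.card α + Nat.card (Quotient s)) := by
  rw [Equiv.Perm.sign_of_cycleType]
  refine (neg_one_pow_congr' ?_).symm
  have h := card_quot_sameCycle x s hs
  have h2 := Equiv.Perm.sum_cycleType x
  omega

namespace CombMap

variable {M : CombMap}

private lemma sigma_mul_self (M : CombMap) : M.σ * M.σ = 1 := by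
  ext d
  simp [Equiv.Perm.mul_apply, M.σ_invol d]

private lemma sigma_zpow (M : CombMap) (i : ℤ) : M.σ ^ i = 1 ∨ M.σ ^ i = M.σ := by
  have h2 : M.σ ^ (2:ℤ) = 1 := by
    rw [show (2:ℤ) = ((2:ℕ) : ℤ) from rfl, zpow_natCast, pow_two, sigma_mul_self]
  rcases Int.even_or_odd i with ⟨m, hm⟩ | ⟨m, hm⟩
  · left; rw [hm, ← two_mul, zpow_mul, h2, one_zpow]
  · right; rw [hm, zpow_add, zpow_mul, h2, one_zpow, one_mul, zpow_one]

private lemma sameCycle_sigma {d d' : M.D} (h : M.σ.SameCycle d d') :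
    d' = d ∨ d' = M.σ d := by
  obtain ⟨i, hi⟩ := h
  rcases sigma_zpow M i with h1 | h1 <;> rw [h1] at hi
  · left; exact hi.symm
  · right; exact hi.symm

private lemma vtx_eq_of {d d' : M.D} (h : M.ρ.SameCycle d d') : M.vtx d = M.vtx d' :=
  Quot.sound h

private lemma edg_eq_of {d d' : M.D} (h : M.σ.SameCycle d d') : M.edg d = M.edg d' :=
  Quot.sound h

private lemma fce_eq_of {d d' : M.D} (h : M.φ.SameCycle d d') : M.fce d = M.fce d' :=
  Quot.sound h

private lemma sameCycle_of_edg_eq {d d' : M.D} (h : M.edg d = M.edg d') :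
    M.σ.SameCycle d d' := Quotient.exact h

private lemma vtx_sigma_rho (d : M.D) : M.vtx (M.ρ (M.σ d)) = M.vtx (M.σ d) :=
  (vtx_eq_of ⟨1, by simp⟩).symm

private lemma fce_phi (d : M.D) : M.fce (M.φ d) = M.fce d :=
  (fce_eq_of ⟨1, by simp⟩).symm

/-- `φ` has no fixed points. -/
private lemma phi_ne (hs : M.Simple) (d : M.D) : M.φ d ≠ d := by
  intro h
  have h1 : M.vtx (M.σ d) = M.vtx d := by
    rw [← vtx_sigma_rho d]
    exact congrArg M.vtx h
  exact hs.1 d h1.symm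

/-- `φ` has no 2-cycles. -/
private lemma phi_sq_ne (hs : M.Simple) (hd : M.DualLoopFree) (d : M.D) :
    M.φ (M.φ d) ≠ d := by
  intro h
  have hne : M.φ d ≠ d := phi_ne hs d
  have hve : M.vtx (M.φ d) = M.vtx (M.σ d) := vtx_sigma_rho d
  have hvd : M.vtx d = M.vtx (M.σ (M.φ d)) := by
    conv_lhs => rw [← h]
    exact vtx_sigma_rho (M.φ d)
  have hedg : M.edg d = M.edg (M.σ (M.φ d)) := by
    refine hs.2 d (M.σ (M.φ d)) hvd ?_
    rw [M.σ_invol (M.φ d)]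
    exact hve.symm
  have hedg2 : M.edg d = M.edg (M.φ d) := by
    rw [hedg]
    exact edg_eq_of ⟨1, by simpa using M.σ_invol (M.φ d)⟩
  rcases sameCycle_sigma (sameCycle_of_edg_eq hedg2) with h1 | h1
  · exact hne h1
  · exact hd d ((fce_phi d).symm.trans (congrArg M.fce h1))

private lemma three_le_faceSize (hs : M.Simple) (hd : M.DualLoopFree) (f : M.Face) :
    3 ≤ M.faceSize f := by
  obtain ⟨d, rfl⟩ := Quotient.exists_rep f
  have hf1 : M.fce (M.φ d) = Quotient.mk M.fSetoid d := fce_phi d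
  have hf2 : M.fce (M.φ (M.φ d)) = Quotient.mk M.fSetoid d :=
    (fce_phi (M.φ d)).trans (fce_phi d)
  have hsub : ({d, M.φ d, M.φ (M.φ d)} : Set M.D) ⊆
      {d' | M.fce d' = Quotient.mk M.fSetoid d} := by
    rintro d' (rfl | rfl | rfl)
    · rfl
    · exact hf1
    · exact hf2
  have hcard3 : ({d, M.φ d, M.φ (M.φ d)} : Set M.D).ncard = 3 :=
    Set.ncard_eq_three.2 ⟨d, M.φ d, M.φ (M.φ d), (phi_ne hs d).symm,
      (phi_sq_ne hs hd d).symm, (phi_ne hs (M.φ d)).symm, rfl⟩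
  have hle : 3 ≤ ({d' | M.fce d' = Quotient.mk M.fSetoid d} : Set M.D).ncard := by
    rw [← hcard3]
    exact Set.ncard_le_ncard hsub (Set.toFinite _)
  rw [← Nat.card_coe_set_eq] at hle
  exact hle

private lemma card_bound (hs : M.Simple) : Nat.card M.D + M.nV ≤ M.nV * M.nV := by
  have hinj : Function.Injective
      (Sum.elim (fun d => (M.vtx d, M.vtx (M.σ d))) (fun v => (v, v)) :
        M.D ⊕ M.Vertex → M.Vertex × M.Vertex) := by
    rintro (d | v) (d' | v') h <;>
      simp only [Sum.elim_inl, Sum.elim_inr, Prod.mk.injEq] at h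
    · obtain ⟨h1, h2⟩ := h
      rcases sameCycle_sigma (sameCycle_of_edg_eq (hs.2 d d' h1 h2)) with rfl | rfl
      · rfl
      · exact absurd h1 (hs.1 d)
    · exact absurd (h.1.trans h.2.symm) (hs.1 d)
    · exact absurd (h.1.symm.trans h.2) (hs.1 d')
    · exact congrArg Sum.inr h.1
  calc Nat.card M.D + M.nV = Nat.card (M.D ⊕ M.Vertex) := (Nat.card_sum).symm
    _ ≤ Nat.card (M.Vertex × M.Vertex) := Nat.card_le_card_of_injective _ hinj
    _ = M.nV * M.nV := Nat.card_prod _ _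

private lemma nF_bound (hd : M.DualLoopFree) {fe : M.Face} {k : ℕ}
    (hnbrs : Nat.card {f : M.Face // M.FaceAdj fe f} = k) : k + 1 ≤ M.nF := by
  have hinj : Function.Injective
      (Sum.elim (Subtype.val : {f // M.FaceAdj fe f} → M.Face) (fun _ : Unit => fe)) := by
    rintro (f | u) (f' | u') h <;> simp only [Sum.elim_inl, Sum.elim_inr] at h
    · exact congrArg Sum.inl (Subtype.ext h)
    · obtain ⟨d, h1, h2⟩ := f.2
      exact absurd (h1.trans (h2.trans h).symm) (hd d)
    · obtain ⟨d, h1, h2⟩ := f'.2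
      exact absurd (h1.trans (h2.trans h.symm).symm) (hd d)
    · cases u; cases u'; rfl
  have hle := Nat.card_le_card_of_injective _ hinj
  rw [Nat.card_sum, hnbrs] at hle
  simpa [CombMap.nF] using hle

private lemma faceSum_bound (hs : M.Simple) (hd : M.DualLoopFree) (fe : M.Face) :
    M.faceSize fe + 3 * (M.nF - 1) ≤ Nat.card M.D := by
  classical
  letI : Fintype M.Face := Fintype.ofFinite _
  rw [nat_card_fiber M.fce]
  have hsplit : M.faceSize fe + ∑ f ∈ Finset.univ.erase fe, Nat.card {d // M.fce d = f}
      = ∑ f : M.Face, Nat.card {d // M.fce d = f} := by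
    exact Finset.add_sum_erase _ _ (Finset.mem_univ fe)
  rw [← hsplit]
  have h1 := Finset.card_nsmul_le_sum (Finset.univ.erase fe)
    (fun f => Nat.card {d // M.fce d = f}) 3 (fun f _ => three_le_faceSize hs hd f)
  rw [smul_eq_mul] at h1
  have h2 : (Finset.univ.erase fe).card = M.nF - 1 := by
    rw [Finset.card_erase_of_mem (Finset.mem_univ fe), Finset.card_univ]
    rw [show M.nF = Fintype.card M.Face from Nat.card_eq_fintype_card]
  rw [h2] at h1
  omega

private lemma card_D_eq (M : CombMap) : Nat.card M.D = 2 * M.nE := by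
  classical
  letI : Fintype M.Edge := Fintype.ofFinite _
  rw [nat_card_fiber M.edg]
  have h : ∀ e : M.Edge, Nat.card {d // M.edg d = e} = 2 := by
    intro e
    obtain ⟨d, rfl⟩ := Quotient.exists_rep e
    have hset : {d' | M.edg d' = Quotient.mk M.eSetoid d} = {d, M.σ d} := by
      ext d'
      simp only [Set.mem_setOf_eq, Set.mem_insert_iff, Set.mem_singleton_iff]
      constructor
      · intro h
        exact sameCycle_sigma ((sameCycle_of_edg_eq h).symm)
      · rintro (rfl | rfl)
        · rfl
        · exact edg_eq_of ⟨1, by simpa using M.σ_invol d⟩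
    have hcard : Nat.card {d' // M.edg d' = Quotient.mk M.eSetoid d}
        = ({d, M.σ d} : Set M.D).ncard := by
      rw [← hset, ← Nat.card_coe_set_eq]
      exact Nat.card_congr (Equiv.subtypeEquivRight (fun _ => Iff.rfl))
    rw [hcard, Set.ncard_pair (Ne.symm (M.σ_fixfree d))]
  rw [Finset.sum_congr rfl (fun e _ => h e), Finset.sum_const, smul_eq_mul, Finset.card_univ,
    mul_comm, show M.nE = Fintype.card M.Edge from Nat.card_eq_fintype_card]

end CombMap

end AuxLemmas

/-- For `k ∈ {3,4,5}`, there is no empty `k`-circuit whose spanning face `f_e`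
neighbours `k` pairwise different faces. -/
theorem no_small_empty_circuit_with_distinct_neighbours
    (M : CombMap) (k : ℕ) (hk : k ∈ ({3, 4, 5} : Set ℕ)) (fe : M.Face)
    (hcirc : M.IsEmptyCircuit k fe)
    (hnbrs : Nat.card {f : M.Face // M.FaceAdj fe f} = k) :
    False := by
  classical
  obtain ⟨hV, hfe, -, hsimple, hdual, -⟩ := hcirc
  have h1 : Nat.card M.D + M.nV ≤ M.nV * M.nV := CombMap.card_bound hsimple
  have h1' : Nat.card M.D + M.nV ≤ M.nV * k :=
    le_trans h1 (Nat.mul_le_mul_left _ hV)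
  have h2 : M.faceSize fe + 3 * (M.nF - 1) ≤ Nat.card M.D :=
    CombMap.faceSum_bound hsimple hdual fe
  rw [hfe] at h2
  have h3 : k + 1 ≤ M.nF := CombMap.nF_bound hdual hnbrs
  have h5 : Nat.card M.D = 2 * M.nE := CombMap.card_D_eq M
  have hVk : M.nV ≤ k := hV
  simp only [Set.mem_insert_iff, Set.mem_singleton_iff] at hk
  rcases hk with rfl | rfl | rfl
  · omega
  · omega
  · -- k = 5 : the parity argument
    have hnV : M.nV = 5 := by omega
    have hn : Nat.card M.D = 20 := by omega
    have hnF : M.nF = 6 := by omega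
    have hnE : M.nE = 10 := by omega
    letI : Fintype M.D := Fintype.ofFinite _
    have hFD : Fintype.card M.D = 20 := by rw [← Nat.card_eq_fintype_card]; exact hn
    have hρ := sign_eq_pow_card M.ρ M.vSetoid (fun a b => Iff.rfl)
    have hσ := sign_eq_pow_card M.σ M.eSetoid (fun a b => Iff.rfl)
    have hφ := sign_eq_pow_card M.φ M.fSetoid (fun a b => Iff.rfl)
    have hQv : Nat.card (Quotient M.vSetoid) = 5 := hnV
    have hQe : Nat.card (Quotient M.eSetoid) = 10 := hnE
    have hQf : Nat.card (Quotient M.fSetoid) = 6 := hnF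
    rw [hFD, hQv] at hρ
    rw [hFD, hQe] at hσ
    rw [hFD, hQf] at hφ
    have hmul : Equiv.Perm.sign M.φ = Equiv.Perm.sign M.ρ * Equiv.Perm.sign M.σ := by
      rw [show M.φ = M.ρ * M.σ from rfl, map_mul]
    rw [hρ, hσ, hφ, ← pow_add] at hmul
    have h26 : ((-1:ℤˣ))^(20+6) = 1 := Even.neg_one_pow (by decide)
    have h55 : ((-1:ℤˣ))^(20+5+(20+10)) = -1 := Odd.neg_one_pow (by decide)
    rw [h26, h55] at hmul
    exact absurd hmul (by decide)
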